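/- Let f ∈ L¹(ℝ³) ∩ L∞(ℝ³) be nonnegative with w > 0 satisfying w·∫_{ℝ³} f dR < 1, and define G = w² f + 𝓕⁻¹[ w³·(𝓕f)² / (1 − w·𝓕f) ]. If G(R) ≥ 0 for almost every R ∈ ℝ³, then G is integrable on ℝ³ and ∫_{ℝ³} G dR = w²·(∫_{ℝ³} f dR) / (1 − w·∫_{ℝ³} f dR). -/

import Mathlib

open MeasureTheory Filter Real Complex
open scoped FourierTransform RealInnerProductSpace Topology Convolution ENNReal

noncomputable section

local notation "EE" => EuclideanSpace ℝ (Fin 3)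


lemma flip_formula {u v : EE → ℂ} (hu : Integrable u) (hv : Integrable v) :
    ∫ ξ, 𝓕 u ξ * v ξ = ∫ x, u x * 𝓕 v x := by
  simpa [smul_eq_mul] using! (VectorFourier.integral_fourierIntegral_smul_eq_flip (L := innerₗ EE)
    Real.continuous_fourierChar continuous_inner hu hv)

lemma key_tendsto {u : EE → ℂ} (hu : Integrable u) (hcont : ContinuousAt u 0) :
    Tendsto (fun (c : ℝ) ↦ ∫ w : EE, cexp (-(c⁻¹ : ℝ) * ‖w‖ ^ 2) * 𝓕 u w) atTop (𝓝 (u 0)) := by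
  have B := Real.tendsto_integral_gaussian_smul' hu (v := (0 : EE)) hcont
  apply B.congr'
  filter_upwards [Ioi_mem_atTop 0] with c (hc : 0 < c)
  have hGint : Integrable (fun w : EE ↦ cexp (-(c⁻¹ : ℝ) * ‖w‖ ^ 2)) := by
    simpa using GaussianFourier.integrable_cexp_neg_mul_sq_norm_add
      (b := (c⁻¹ : ℂ)) (by simpa using inv_pos.2 hc) 0 (0 : EE)
  have hFG : ∀ w : EE, 𝓕 (fun v : EE ↦ cexp (-(c⁻¹ : ℝ) * ‖v‖ ^ 2)) w
      = ((π * c : ℂ) ^ ((Module.finrank ℝ EE : ℂ) / 2) * cexp (-π ^ 2 * c * ‖(0:EE) - w‖ ^ 2)) := by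
    intro w
    have := fourier_gaussian_innerProductSpace (V := EE)
      (b := (c⁻¹ : ℂ)) (by simpa using inv_pos.2 hc) w
    rw [show (fun v : EE ↦ cexp (-(c⁻¹ : ℝ) * ‖v‖ ^ 2)) = (fun v : EE ↦ cexp (-(c⁻¹:ℂ) * ‖v‖ ^ 2))
      by push_cast; rfl, this]
    have hc0 : (c : ℂ) ≠ 0 := by exact_mod_cast hc.ne'
    congr 1
    · congr 1
      field_simp
    · congr 1
      rw [zero_sub, norm_neg]
      field_simp
  calc ∫ w : EE, ((π * c : ℂ) ^ ((Module.finrank ℝ EE : ℂ) / 2) * cexp (-π ^ 2 * c * ‖(0:EE) - w‖ ^ 2)) • u w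
      = ∫ w : EE, 𝓕 (fun v : EE ↦ cexp (-(c⁻¹ : ℝ) * ‖v‖ ^ 2)) w • u w := by
        simp_rw [hFG]
    _ = ∫ w : EE, cexp (-(c⁻¹ : ℝ) * ‖w‖ ^ 2) * 𝓕 u w := by
        simpa [smul_eq_mul] using! (VectorFourier.integral_fourierIntegral_smul_eq_flip
          (L := innerₗ EE) Real.continuous_fourierChar continuous_inner hGint hu)

lemma fourier_conv {u v : EE → ℂ} (hu : Integrable u) (hv : Integrable v) (ξ : EE) :
    𝓕 (u ⋆[ContinuousLinearMap.mul ℂ ℂ, volume] v) ξ = 𝓕 u ξ * 𝓕 v ξ := by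
  have hu' : Integrable (fun t : EE ↦ 𝐞 (-⟪t, ξ⟫) • u t) :=
    (Real.fourierIntegral_convergent_iff ξ).2 hu
  have hv' : Integrable (fun t : EE ↦ 𝐞 (-⟪t, ξ⟫) • v t) :=
    (Real.fourierIntegral_convergent_iff ξ).2 hv
  have key : ∀ x : EE, 𝐞 (-⟪x, ξ⟫) • (u ⋆[ContinuousLinearMap.mul ℂ ℂ, volume] v) x
      = ((fun t : EE ↦ 𝐞 (-⟪t, ξ⟫) • u t) ⋆[ContinuousLinearMap.mul ℂ ℂ, volume]
         (fun t : EE ↦ 𝐞 (-⟪t, ξ⟫) • v t)) x := by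
    intro x
    rw [convolution_def, convolution_def]
    have : ∀ t : EE, (ContinuousLinearMap.mul ℂ ℂ) ((𝐞 (-⟪t, ξ⟫) : Circle) • u t)
        ((𝐞 (-⟪x - t, ξ⟫) : Circle) • v (x - t))
        = (𝐞 (-⟪x, ξ⟫) : Circle) • ((ContinuousLinearMap.mul ℂ ℂ) (u t) (v (x - t))) := by
      intro t
      simp only [ContinuousLinearMap.mul_apply', Circle.smul_def]
      rw [show (-⟪x, ξ⟫ : ℝ) = (-⟪t, ξ⟫) + (-⟪x - t, ξ⟫) by rw [inner_sub_left]; ring,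
        AddChar.map_add_eq_mul]
      simp only [smul_eq_mul]
      push_cast
      ring
    simp_rw [this, Circle.smul_def, smul_eq_mul]
    rw [integral_const_mul]
  rw [Real.fourier_eq]
  simp_rw [key]
  rw [integral_convolution _ hu' hv', ContinuousLinearMap.mul_apply',
    ← Real.fourier_eq, ← Real.fourier_eq]

lemma fourier_neg_conj (f : EE → ℝ) (ξ : EE) :
    𝓕 (fun x : EE ↦ ((f (-x) : ℂ))) ξ = starRingEnd ℂ (𝓕 (fun x : EE ↦ (f x : ℂ)) ξ) := by
  rw [Real.fourier_eq', Real.fourier_eq', ← integral_conj,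
    ← integral_neg_eq_self]
  congr with v
  simp only [smul_eq_mul, map_mul, Complex.conj_ofReal, ← Complex.exp_conj, map_mul,
    Complex.conj_I, Complex.conj_ofReal, inner_neg_left, neg_neg]
  congr 2
  push_cast
  ring

lemma finrank_E : Module.finrank ℝ EE = 3 := by simp [finrank_euclideanSpace]

lemma integral_gauss_E {b : ℝ} (hb : 0 < b) :
    ∫ ξ : EE, rexp (-b * ‖ξ‖ ^ 2) = (π / b) ^ (3 / 2 : ℝ) := by
  rw [GaussianFourier.integral_rexp_neg_mul_sq_norm hb, finrank_E]
  norm_num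

lemma integrable_gauss_E {b : ℝ} (hb : 0 < b) :
    Integrable (fun ξ : EE ↦ rexp (-b * ‖ξ‖ ^ 2)) := by
  have h := GaussianFourier.integrable_cexp_neg_mul_sq_norm_add
    (b := (b : ℂ)) (by simpa using hb) 0 (0 : EE)
  have := h.norm
  refine this.congr (Eventually.of_forall fun ξ ↦ ?_)
  show ‖cexp (-(b:ℂ) * (‖ξ‖:ℂ) ^ 2 + 0 * ((inner ℝ (0:EE) ξ : ℝ) : ℂ))‖ = rexp (-b * ‖ξ‖ ^ 2)
  rw [show (-(b:ℂ) * (‖ξ‖:ℂ) ^ 2 + 0 * ((inner ℝ (0:EE) ξ : ℝ) : ℂ)) = (((-b * ‖ξ‖ ^ 2 : ℝ)) : ℂ) by push_cast; ring]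
  rw [Complex.norm_exp, Complex.ofReal_re]

lemma norm_fourier_gauss_E {b : ℝ} (hb : 0 < b) (ξ : EE) :
    ‖𝓕 (fun v : EE ↦ cexp (-(b : ℂ) * ‖v‖ ^ 2)) ξ‖
      = (π / b) ^ (3 / 2 : ℝ) * rexp (-π ^ 2 * ‖ξ‖ ^ 2 / b) := by
  rw [fourier_gaussian_innerProductSpace (by simpa using hb) ξ, finrank_E]
  rw [norm_mul]
  congr 1
  · rw [show ((π : ℂ) / (b : ℂ)) = (((π / b : ℝ)) : ℂ) by push_cast; ring,
      Complex.norm_cpow_eq_rpow_re_of_pos (by positivity)]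
    norm_num
  · rw [show (-(π : ℂ) ^ 2 * (‖ξ‖ : ℂ) ^ 2 / (b : ℂ)) = (((-π ^ 2 * ‖ξ‖ ^ 2 / b : ℝ)) : ℂ)
      by push_cast; ring]
    rw [Complex.norm_exp, Complex.ofReal_re]

lemma sq_norm_fourier_integrable {f : EE → ℝ} (hf_int : Integrable f) {M : ℝ}
    (hf_bdd : ∀ x, f x ≤ M) (hf_nonneg : ∀ x, 0 ≤ f x) :
    Integrable (fun ξ : EE ↦ ‖𝓕 (fun x : EE ↦ (f x : ℂ)) ξ‖ ^ 2) := by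
  set fc : EE → ℂ := fun x ↦ (f x : ℂ) with hfc_def
  set z : EE → ℂ := 𝓕 fc with hz_def
  have hfc : Integrable fc := hf_int.ofReal
  have hfn : Integrable (fun x : EE ↦ f (-x)) := hf_int.comp_neg
  have hfnc : Integrable (fun x : EE ↦ ((f (-x) : ℝ) : ℂ)) := hfn.ofReal
  have hz_cont : Continuous z :=
    VectorFourier.fourierIntegral_continuous Real.continuous_fourierChar
      (by exact continuous_inner) hfc
  have hz_bdd : ∀ ξ, ‖z ξ‖ ≤ ∫ x, f x := by
    intro ξ
    have := VectorFourier.norm_fourierIntegral_le_integral_norm 𝐞 volume (innerₗ EE) fc ξ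
    refine this.trans (le_of_eq ?_)
    simp only [hfc_def, Complex.norm_real]
    exact integral_congr_ae (Eventually.of_forall fun x ↦ abs_of_nonneg (hf_nonneg x))
  -- the autocorrelation
  set h : EE → ℂ := fc ⋆[ContinuousLinearMap.mul ℂ ℂ, volume] (fun x : EE ↦ ((f (-x) : ℝ) : ℂ))
    with hh_def
  have hh_int : Integrable h := hfc.integrable_convolution _ hfnc
  have hh_bdd : ∀ x, ‖h x‖ ≤ M * ∫ t, f t := by
    intro x
    rw [hh_def, convolution_def]
    refine (norm_integral_le_integral_norm _).trans ?_
    have : ∀ t : EE, ‖(ContinuousLinearMap.mul ℂ ℂ) (fc t) ((f (-(x - t)) : ℝ) : ℂ)‖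
        = f t * f (t - x) := by
      intro t
      simp only [ContinuousLinearMap.mul_apply', norm_mul, Complex.norm_real, hfc_def,
        neg_sub]
      rw [Real.norm_eq_abs, Real.norm_eq_abs, _root_.abs_of_nonneg (hf_nonneg _), _root_.abs_of_nonneg (hf_nonneg _)]
    simp_rw [this]
    have hb : ∀ t : EE, f t * f (t - x) ≤ M * f t := by
      intro t
      calc f t * f (t - x) ≤ f t * M := by
            exact mul_le_mul_of_nonneg_left (hf_bdd _) (hf_nonneg _)
        _ = M * f t := mul_comm _ _
    calc ∫ t, f t * f (t - x) ≤ ∫ t, M * f t := by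
          refine integral_mono_of_nonneg (Eventually.of_forall fun t ↦ ?_)
            (hf_int.const_mul M) (Eventually.of_forall hb)
          exact mul_nonneg (hf_nonneg _) (hf_nonneg _)
      _ = M * ∫ t, f t := integral_const_mul _ _
  have hFh : ∀ ξ, 𝓕 h ξ = ((‖z ξ‖ ^ 2 : ℝ) : ℂ) := by
    intro ξ
    rw [hh_def, fourier_conv hfc hfnc, fourier_neg_conj, ← hz_def, Complex.mul_conj]
    rw [Complex.normSq_eq_norm_sq]
  have key : ∀ b : ℝ, 0 < b → ∫ ξ : EE, rexp (-b * ‖ξ‖ ^ 2) * ‖z ξ‖ ^ 2 ≤ M * ∫ t, f t := by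
    intro b hb
    set Gb : EE → ℂ := fun ξ ↦ cexp (-(b : ℂ) * ‖ξ‖ ^ 2) with hGb_def
    have hGb_int : Integrable Gb := by
      have := GaussianFourier.integrable_cexp_neg_mul_sq_norm_add
        (b := (b : ℂ)) (by simpa using hb) 0 (0 : EE)
      refine this.congr (Eventually.of_forall fun ξ ↦ ?_)
      simp [hGb_def]
    have hmf := flip_formula hGb_int hh_int
    have hrhs : ∫ x : EE, Gb x * 𝓕 h x
        = ((∫ x : EE, rexp (-b * ‖x‖ ^ 2) * ‖z x‖ ^ 2 : ℝ) : ℂ) := by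
      have : ∀ x : EE, Gb x * 𝓕 h x = ((rexp (-b * ‖x‖ ^ 2) * ‖z x‖ ^ 2 : ℝ) : ℂ) := by
        intro x
        rw [hFh x, hGb_def]
        show cexp (-(b:ℂ) * (‖x‖:ℂ) ^ 2) * ((‖z x‖ ^ 2 : ℝ) : ℂ) = _
        rw [show (-(b : ℂ) * (‖x‖ : ℂ) ^ 2) = ((-b * ‖x‖ ^ 2 : ℝ) : ℂ) by push_cast; ring,
          ← Complex.ofReal_exp]
        norm_cast
      simp_rw [this]
      exact integral_ofReal
    have hlhs : ‖∫ ξ : EE, 𝓕 Gb ξ * h ξ‖ ≤ M * ∫ t, f t := by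
      refine (norm_integral_le_integral_norm _).trans ?_
      have hbd : ∀ ξ : EE, ‖𝓕 Gb ξ * h ξ‖
          ≤ ((π / b) ^ (3 / 2 : ℝ) * rexp (-(π ^ 2 / b) * ‖ξ‖ ^ 2)) * (M * ∫ t, f t) := by
        intro ξ
        rw [norm_mul, show (-(π ^ 2 / b) * ‖ξ‖ ^ 2 : ℝ) = -π ^ 2 * ‖ξ‖ ^ 2 / b by ring,
          norm_fourier_gauss_E hb]
        exact mul_le_mul_of_nonneg_left (hh_bdd ξ) (by positivity)
      have hMf : 0 ≤ M * ∫ t, f t := le_trans (norm_nonneg (h 0)) (hh_bdd 0)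
      calc ∫ ξ : EE, ‖𝓕 Gb ξ * h ξ‖
          ≤ ∫ ξ : EE, ((π / b) ^ (3 / 2 : ℝ) * rexp (-(π ^ 2 / b) * ‖ξ‖ ^ 2)) * (M * ∫ t, f t) := by
            refine integral_mono_of_nonneg (Eventually.of_forall fun ξ ↦ norm_nonneg _) ?_
              (Eventually.of_forall hbd)
            exact (((integrable_gauss_E (show (0:ℝ) < π ^ 2 / b by positivity)).const_mul
              _).mul_const _)
        _ = ((π / b) ^ (3 / 2 : ℝ) * ((π / (π ^ 2 / b)) ^ (3 / 2 : ℝ))) * (M * ∫ t, f t) := by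
            rw [integral_mul_const, integral_const_mul, integral_gauss_E (by positivity)]
        _ = M * ∫ t, f t := by
            rw [← Real.mul_rpow (by positivity) (by positivity),
              show (π / b) * (π / (π ^ 2 / b)) = 1 by field_simp, Real.one_rpow, one_mul]
    have : ∫ ξ : EE, rexp (-b * ‖ξ‖ ^ 2) * ‖z ξ‖ ^ 2
        = Complex.re (∫ ξ : EE, 𝓕 Gb ξ * h ξ) := by
      rw [hmf, hrhs, Complex.ofReal_re]
    rw [this]
    exact (Complex.re_le_norm _).trans hlhs
  -- Fatou
  have hC : ∀ k : ℕ, ∫⁻ ξ : EE, ENNReal.ofReal (rexp (-((k : ℝ) + 1)⁻¹ * ‖ξ‖ ^ 2) * ‖z ξ‖ ^ 2)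
      ≤ ENNReal.ofReal (M * ∫ t, f t) := by
    intro k
    have hb : (0 : ℝ) < ((k : ℝ) + 1)⁻¹ := by positivity
    have hgc : Continuous fun ξ : EE ↦ rexp (-((k : ℝ) + 1)⁻¹ * ‖ξ‖ ^ 2) * ‖z ξ‖ ^ 2 := by
      fun_prop
    have hint : Integrable (fun ξ : EE ↦ rexp (-((k : ℝ) + 1)⁻¹ * ‖ξ‖ ^ 2) * ‖z ξ‖ ^ 2) := by
      refine Integrable.mono' ((integrable_gauss_E hb).mul_const ((∫ x, f x) ^ 2))
        hgc.aestronglyMeasurable (Eventually.of_forall fun ξ ↦ ?_)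
      rw [Real.norm_eq_abs, _root_.abs_of_nonneg (by positivity)]
      refine mul_le_mul_of_nonneg_left ?_ (by positivity)
      exact pow_le_pow_left₀ (norm_nonneg _) (hz_bdd ξ) 2
    rw [← ofReal_integral_eq_lintegral_ofReal hint
      (Eventually.of_forall fun ξ ↦ by positivity)]
    exact ENNReal.ofReal_le_ofReal (key _ hb)
  have hfin : ∫⁻ ξ : EE, ENNReal.ofReal (‖z ξ‖ ^ 2) ≤ ENNReal.ofReal (M * ∫ t, f t) := by
    have hmeas : ∀ k : ℕ, Measurable fun ξ : EE ↦
        ENNReal.ofReal (rexp (-((k : ℝ) + 1)⁻¹ * ‖ξ‖ ^ 2) * ‖z ξ‖ ^ 2) := by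
      intro k
      exact (Continuous.measurable (by fun_prop)).ennreal_ofReal
    have hpt : ∀ ξ : EE, Tendsto (fun k : ℕ ↦
        ENNReal.ofReal (rexp (-((k : ℝ) + 1)⁻¹ * ‖ξ‖ ^ 2) * ‖z ξ‖ ^ 2)) atTop
        (𝓝 (ENNReal.ofReal (‖z ξ‖ ^ 2))) := by
      intro ξ
      refine (ENNReal.continuous_ofReal.tendsto _).comp ?_
      have h1 : Tendsto (fun k : ℕ ↦ -((k : ℝ) + 1)⁻¹ * ‖ξ‖ ^ 2) atTop (𝓝 0) := by
        have h0 : Tendsto (fun k : ℕ ↦ ((k : ℝ) + 1)⁻¹) atTop (𝓝 0) := by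
          simpa [one_div] using (tendsto_one_div_add_atTop_nhds_zero_nat :
            Tendsto (fun n : ℕ ↦ 1 / ((n : ℝ) + 1)) atTop (𝓝 0))
        simpa using (h0.neg.mul_const (‖ξ‖ ^ 2))
      have h2 := ((Real.continuous_exp.tendsto 0).comp h1).mul_const (‖z ξ‖ ^ 2)
      simpa using h2
    calc ∫⁻ ξ : EE, ENNReal.ofReal (‖z ξ‖ ^ 2)
        = ∫⁻ ξ : EE, liminf (fun k : ℕ ↦
            ENNReal.ofReal (rexp (-((k : ℝ) + 1)⁻¹ * ‖ξ‖ ^ 2) * ‖z ξ‖ ^ 2)) atTop := by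
          exact lintegral_congr fun ξ ↦ ((hpt ξ).liminf_eq).symm
      _ ≤ liminf (fun k : ℕ ↦ ∫⁻ ξ : EE,
            ENNReal.ofReal (rexp (-((k : ℝ) + 1)⁻¹ * ‖ξ‖ ^ 2) * ‖z ξ‖ ^ 2)) atTop :=
          lintegral_liminf_le hmeas
      _ ≤ liminf (fun _ : ℕ ↦ ENNReal.ofReal (M * ∫ t, f t)) atTop :=
          liminf_le_liminf (Eventually.of_forall hC)
      _ = ENNReal.ofReal (M * ∫ t, f t) := liminf_const _
  refine ⟨(hz_cont.norm.pow 2).aestronglyMeasurable, ?_⟩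
  rw [hasFiniteIntegral_iff_norm]
  refine lt_of_le_of_lt (le_trans (le_of_eq ?_) hfin) ENNReal.ofReal_lt_top
  exact lintegral_congr fun ξ ↦ by rw [Real.norm_eq_abs, _root_.abs_of_nonneg (by positivity)]

lemma tendsto_weighted_integral {u : EE → ℝ} (hu : Integrable u) :
    Tendsto (fun c : ℝ ↦ ∫ v : EE, rexp (-c⁻¹ * ‖v‖ ^ 2) * u v) atTop (𝓝 (∫ v, u v)) := by
  apply tendsto_integral_filter_of_dominated_convergence _ _ _ hu.norm
  · filter_upwards with v
    nth_rewrite 2 [show u v = rexp (-(0 : ℝ) * ‖v‖ ^ 2) * u v by simp]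
    apply Tendsto.mul_const
    apply (Real.continuous_exp.tendsto _).comp
    exact tendsto_inv_atTop_zero.neg.mul_const _
  · filter_upwards with c using
      ((Continuous.aestronglyMeasurable (by fun_prop)).mul hu.1)
  · filter_upwards [Ici_mem_atTop (0 : ℝ)] with c (hc : 0 ≤ c)
    filter_upwards with v
    rw [norm_mul]
    conv_rhs => rw [← one_mul ‖u v‖]
    gcongr
    rw [Real.norm_eq_abs, _root_.abs_of_nonneg (Real.exp_nonneg _)]
    rw [Real.exp_le_one_iff]
    have : 0 ≤ c⁻¹ * ‖v‖ ^ 2 := by positivity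
    linarith



open MeasureTheory Filter Real
open scoped FourierTransform

/-- With `f ∈ L¹ ∩ L∞` nonnegative, `w > 0`, `w·∫f < 1` and
`G = w²f + 𝓕⁻¹[w³(𝓕f)²/(1−w𝓕f)]`: if `G ≥ 0` a.e., then `G` is integrable and
`∫ G = w²·(∫f)/(1 − w·∫f)`. -/
theorem stmt3 (f : EuclideanSpace ℝ (Fin 3) → ℝ)
    (hf_int : Integrable f) (hf_bdd : ∃ M, ∀ x, f x ≤ M)
    (hf_nonneg : ∀ x, 0 ≤ f x)
    (w : ℝ) (hw : 0 < w) (hwf : w * ∫ x, f x < 1)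
    (G : EuclideanSpace ℝ (Fin 3) → ℝ)
    (hG : G = fun R => w ^ 2 * f R + (𝓕⁻ (fun ξ : EuclideanSpace ℝ (Fin 3) =>
      ((w : ℂ) ^ 3 * (𝓕 (fun x => (f x : ℂ)) ξ) ^ 2 /
        (1 - (w : ℂ) * 𝓕 (fun x => (f x : ℂ)) ξ) : ℂ)) R).re)
    (hGpos : ∀ᵐ R, 0 ≤ G R) :
    Integrable G ∧ (∫ R, G R) = w ^ 2 * (∫ R, f R) / (1 - w * ∫ R, f R) := by
  obtain ⟨M, hM⟩ := hf_bdd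
  set a : ℝ := ∫ x, f x with ha_def
  have ha : 0 ≤ a := integral_nonneg hf_nonneg
  have hpos : 0 < 1 - w * a := by linarith
  set fc : EE → ℂ := fun x ↦ (f x : ℂ) with hfc_def
  have hfc : Integrable fc := hf_int.ofReal
  set z : EE → ℂ := 𝓕 fc with hz_def
  have hz_cont : Continuous z :=
    VectorFourier.fourierIntegral_continuous Real.continuous_fourierChar
      (by exact continuous_inner) hfc
  have hz_bdd : ∀ ξ, ‖z ξ‖ ≤ a := by
    intro ξ
    refine (VectorFourier.norm_fourierIntegral_le_integral_norm 𝐞 volume (innerₗ EE) fc ξ).trans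
      (le_of_eq ?_)
    simp only [hfc_def, Complex.norm_real]
    exact integral_congr_ae (Eventually.of_forall fun x ↦
      by simp [Real.norm_eq_abs, _root_.abs_of_nonneg (hf_nonneg x)])
  have hden : ∀ ξ, 1 - w * a ≤ ‖1 - (w : ℂ) * z ξ‖ := by
    intro ξ
    have h1 : ‖(w : ℂ) * z ξ‖ ≤ w * a := by
      rw [norm_mul, Complex.norm_real, Real.norm_eq_abs, _root_.abs_of_nonneg hw.le]
      exact mul_le_mul_of_nonneg_left (hz_bdd ξ) hw.le
    calc 1 - w * a ≤ ‖(1 : ℂ)‖ - ‖(w : ℂ) * z ξ‖ := by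
          rw [norm_one]; linarith
      _ ≤ ‖1 - (w : ℂ) * z ξ‖ := norm_sub_norm_le _ _
  have hne : ∀ ξ, (1 : ℂ) - (w : ℂ) * z ξ ≠ 0 := by
    intro ξ h
    have := hden ξ
    rw [h, norm_zero] at this
    linarith
  set g : EE → ℂ := fun ξ ↦ (w : ℂ) ^ 3 * z ξ ^ 2 / (1 - (w : ℂ) * z ξ) with hg_def
  have hg_cont : Continuous g := by
    refine Continuous.div (continuous_const.mul (hz_cont.pow 2))
      (continuous_const.sub (continuous_const.mul hz_cont)) hne
  have hg_int : Integrable g := by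
    refine Integrable.mono' ((sq_norm_fourier_integrable hf_int hM hf_nonneg).const_mul
      (w ^ 3 / (1 - w * a))) hg_cont.aestronglyMeasurable (Eventually.of_forall fun ξ ↦ ?_)
    rw [hg_def]
    simp only [norm_div, norm_mul, norm_pow, Complex.norm_real, Real.norm_eq_abs,
      _root_.abs_of_nonneg hw.le]
    rw [div_eq_mul_inv (w ^ 3), mul_assoc, mul_comm ((1 - w * a)⁻¹), ← mul_assoc,
      ← div_eq_mul_inv]
    refine div_le_div_of_nonneg_left ?_ hpos (hden ξ) |>.trans (le_of_eq ?_)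
    · positivity
    · ring
  have hg0 : g 0 = ((w ^ 3 * a ^ 2 / (1 - w * a) : ℝ) : ℂ) := by
    have hz0 : z 0 = (a : ℂ) := by
      rw [hz_def, Real.fourier_eq]
      simp only [inner_zero_right, neg_zero, AddChar.map_zero_eq_one, one_smul]
      exact integral_ofReal
    rw [hg_def]
    simp only [hz0]
    push_cast
    ring
  -- properties of the inverse transform
  have hH_cont : Continuous (𝓕⁻ g) :=
    VectorFourier.fourierIntegral_continuous Real.continuous_fourierChar
      (by exact (continuous_inner (𝕜 := ℝ) (E := EE)).neg) hg_int
  have hH_bdd : ∀ R, ‖𝓕⁻ g R‖ ≤ ∫ ξ, ‖g ξ‖ := by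
    intro R
    rw [Real.fourierInv_eq_fourier_neg]
    exact VectorFourier.norm_fourierIntegral_le_integral_norm 𝐞 volume (innerₗ EE) g (-R)
  set B : ℝ := ∫ ξ, ‖g ξ‖ with hB_def
  have hGdef : ∀ R : EE, G R = w ^ 2 * f R + (𝓕⁻ g R).re := by
    intro R; rw [hG]
  -- integrability of weighted pieces
  have Iρf : ∀ c : ℝ, 0 ≤ c → Integrable (fun v : EE ↦ rexp (-c⁻¹ * ‖v‖ ^ 2) * f v) := by
    intro c hc
    refine Integrable.mono' hf_int.norm
      ((Continuous.aestronglyMeasurable (by fun_prop)).mul hf_int.1)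
      (Eventually.of_forall fun v ↦ ?_)
    rw [norm_mul]
    conv_rhs => rw [← one_mul ‖f v‖]
    gcongr
    rw [Real.norm_eq_abs, _root_.abs_of_nonneg (Real.exp_nonneg _)]
    rw [Real.exp_le_one_iff]
    have : 0 ≤ c⁻¹ * ‖v‖ ^ 2 := by positivity
    linarith
  have IρH : ∀ c : ℝ, 0 < c →
      Integrable (fun v : EE ↦ ((rexp (-c⁻¹ * ‖v‖ ^ 2) : ℝ) : ℂ) * 𝓕⁻ g v) := by
    intro c hc
    refine Integrable.mono' ((integrable_gauss_E (inv_pos.2 hc)).const_mul B)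
      (((Complex.continuous_ofReal.comp (by fun_prop)).mul hH_cont).aestronglyMeasurable)
      (Eventually.of_forall fun v ↦ ?_)
    rw [norm_mul, Complex.norm_real, Real.norm_eq_abs, _root_.abs_of_nonneg (Real.exp_nonneg _),
      mul_comm B]
    exact mul_le_mul_of_nonneg_left (hH_bdd v) (Real.exp_nonneg _)
  have IρHre : ∀ c : ℝ, 0 < c →
      Integrable (fun v : EE ↦ rexp (-c⁻¹ * ‖v‖ ^ 2) * (𝓕⁻ g v).re) := by
    intro c hc
    refine Integrable.mono' ((integrable_gauss_E (inv_pos.2 hc)).const_mul B)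
      (((Continuous.aestronglyMeasurable (by fun_prop)).mul
        ((Complex.continuous_re.comp hH_cont).aestronglyMeasurable)))
      (Eventually.of_forall fun v ↦ ?_)
    rw [norm_mul, Real.norm_eq_abs (rexp _), _root_.abs_of_nonneg (Real.exp_nonneg _), mul_comm B]
    refine mul_le_mul_of_nonneg_left ?_ (Real.exp_nonneg _)
    refine le_trans ?_ (hH_bdd v)
    rw [Real.norm_eq_abs]
    exact Complex.abs_re_le_norm _
  have IρG : ∀ c : ℝ, 0 < c → Integrable (fun v : EE ↦ rexp (-c⁻¹ * ‖v‖ ^ 2) * G v) := by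
    intro c hc
    refine (((Iρf c hc.le).const_mul (w ^ 2)).add (IρHre c hc)).congr
      (Eventually.of_forall fun v ↦ ?_)
    simp only [Pi.add_apply]
    rw [hGdef v]; ring
  set S : ℝ → ℝ := fun c ↦ ∫ v : EE, rexp (-c⁻¹ * ‖v‖ ^ 2) * G v with hS_def
  have hS : ∀ c : ℝ, 0 < c → S c = w ^ 2 * (∫ v : EE, rexp (-c⁻¹ * ‖v‖ ^ 2) * f v)
      + (∫ v : EE, ((rexp (-c⁻¹ * ‖v‖ ^ 2) : ℝ) : ℂ) * 𝓕⁻ g v).re := by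
    intro c hc
    rw [hS_def]
    have h1 : ∀ v : EE, rexp (-c⁻¹ * ‖v‖ ^ 2) * G v
        = w ^ 2 * (rexp (-c⁻¹ * ‖v‖ ^ 2) * f v) + rexp (-c⁻¹ * ‖v‖ ^ 2) * (𝓕⁻ g v).re := by
      intro v; rw [hGdef v]; ring
    simp only []
    simp_rw [h1]
    rw [integral_add ((Iρf c hc.le).const_mul (w ^ 2)) (IρHre c hc), integral_const_mul]
    congr 1
    have h4 := integral_re (IρH c hc)
    simp only [RCLike.re_to_complex] at h4
    rw [← h4]
    congr 1
    ext v
    rw [Complex.re_ofReal_mul]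
  have T1 : Tendsto (fun c : ℝ ↦ ∫ v : EE, rexp (-c⁻¹ * ‖v‖ ^ 2) * f v) atTop (𝓝 a) :=
    tendsto_weighted_integral hf_int
  have T2 : Tendsto (fun c : ℝ ↦ ∫ v : EE, ((rexp (-c⁻¹ * ‖v‖ ^ 2) : ℝ) : ℂ) * 𝓕⁻ g v)
      atTop (𝓝 (g 0)) := by
    refine (key_tendsto hg_int hg_cont.continuousAt).congr fun c ↦ ?_
    rw [← integral_neg_eq_self (fun v : EE ↦ cexp (-((c⁻¹ : ℝ) : ℂ) * (‖v‖ : ℂ) ^ 2) * 𝓕 g v)]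
    congr 1
    ext v
    rw [norm_neg, ← Real.fourierInv_eq_fourier_neg]
    congr 1
    rw [show (-((c⁻¹ : ℝ) : ℂ) * (‖v‖ : ℂ) ^ 2) = ((-c⁻¹ * ‖v‖ ^ 2 : ℝ) : ℂ) by push_cast; ring,
      ← Complex.ofReal_exp]
  set L : ℝ := w ^ 2 * a + w ^ 3 * a ^ 2 / (1 - w * a) with hL_def
  have T3 : Tendsto S atTop (𝓝 L) := by
    have h2 := (T1.const_mul (w ^ 2)).add ((Complex.continuous_re.tendsto _).comp T2)
    rw [hg0] at h2
    simp only [Function.comp_def, Complex.ofReal_re] at h2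
    rw [hL_def]
    refine Tendsto.congr' ?_ h2
    filter_upwards [Ioi_mem_atTop (0 : ℝ)] with c (hc : 0 < c)
    exact (hS c hc).symm
  have hGm : AEStronglyMeasurable G := by
    rw [hG]
    exact (hf_int.1.const_mul (w ^ 2)).add
      ((Complex.continuous_re.comp hH_cont).aestronglyMeasurable)
  have hint : Integrable G := by
    refine ⟨hGm, ?_⟩
    rw [hasFiniteIntegral_iff_norm]
    have heq : (∫⁻ v, ENNReal.ofReal ‖G v‖) = ∫⁻ v, ENNReal.ofReal (G v) := by
      refine lintegral_congr_ae ?_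
      filter_upwards [hGpos] with v hv
      rw [Real.norm_eq_abs, _root_.abs_of_nonneg hv]
    rw [heq]
    have hb : ∀ k : ℕ, (∫⁻ v, ENNReal.ofReal (rexp (-((k : ℝ) + 1)⁻¹ * ‖v‖ ^ 2) * G v))
        = ENNReal.ofReal (S ((k : ℝ) + 1)) := by
      intro k
      rw [← ofReal_integral_eq_lintegral_ofReal (IρG _ (by positivity))]
      filter_upwards [hGpos] with v hv
      positivity
    have hfatou : (∫⁻ v, ENNReal.ofReal (G v)) ≤ ENNReal.ofReal L := by
      have hpt : ∀ v : EE, Tendsto (fun k : ℕ ↦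
          ENNReal.ofReal (rexp (-((k : ℝ) + 1)⁻¹ * ‖v‖ ^ 2) * G v)) atTop
          (𝓝 (ENNReal.ofReal (G v))) := by
        intro v
        refine (ENNReal.continuous_ofReal.tendsto _).comp ?_
        have h0 : Tendsto (fun k : ℕ ↦ -((k : ℝ) + 1)⁻¹ * ‖v‖ ^ 2) atTop (𝓝 0) := by
          have h00 : Tendsto (fun k : ℕ ↦ ((k : ℝ) + 1)⁻¹) atTop (𝓝 0) := by
            simpa [one_div] using (tendsto_one_div_add_atTop_nhds_zero_nat :
            Tendsto (fun n : ℕ ↦ 1 / ((n : ℝ) + 1)) atTop (𝓝 0))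
          simpa using h00.neg.mul_const (‖v‖ ^ 2)
        have h3 := ((Real.continuous_exp.tendsto _).comp h0).mul_const (G v)
        simpa using h3
      calc (∫⁻ v, ENNReal.ofReal (G v))
          = ∫⁻ v, liminf (fun k : ℕ ↦
              ENNReal.ofReal (rexp (-((k : ℝ) + 1)⁻¹ * ‖v‖ ^ 2) * G v)) atTop :=
            lintegral_congr fun v ↦ ((hpt v).liminf_eq).symm
        _ ≤ liminf (fun k : ℕ ↦ ∫⁻ v,
              ENNReal.ofReal (rexp (-((k : ℝ) + 1)⁻¹ * ‖v‖ ^ 2) * G v)) atTop := by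
            refine lintegral_liminf_le' fun k ↦ ?_
            exact ((Continuous.aemeasurable (by fun_prop)).mul hGm.aemeasurable).ennreal_ofReal
        _ = liminf (fun k : ℕ ↦ ENNReal.ofReal (S ((k : ℝ) + 1))) atTop := by simp_rw [hb]
        _ = ENNReal.ofReal L := by
            refine Tendsto.liminf_eq ?_
            refine (ENNReal.continuous_ofReal.tendsto _).comp (T3.comp ?_)
            exact tendsto_atTop_add_const_right _ 1 tendsto_natCast_atTop_atTop
    exact lt_of_le_of_lt hfatou ENNReal.ofReal_lt_top
  refine ⟨hint, ?_⟩
  have T4 : Tendsto S atTop (𝓝 (∫ v, G v)) := tendsto_weighted_integral hint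
  have hfin : ∫ v, G v = L := tendsto_nhds_unique T4 T3
  rw [hfin, hL_def]
  have hne' : 1 - w * a ≠ 0 := hpos.ne'
  field_simp
  ring
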